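/- If R₁,…,R_m ∈ SO(3) are rotations where Rᵢ is rotation by angle t·κᵢ around unit vector vᵢ, and R_m ∘ ⋯ ∘ R₁ = id for all members of a sequence t = t_n → 0 of parameters (with vᵢ = vᵢ(n) → vᵢ), then Σᵢ κᵢ vᵢ = 0. In the first-order form: for rotations by small angles, Rᵢ(x) = x + t κᵢ [vᵢ, x] + o(t), and the composition being the identity forces the sum Σᵢ κᵢ vᵢ(n) = o(1). -/

import Mathlib

open Matrix

/-- Rotation of ℝ³ by angle θ around the unit axis u (Rodrigues' formula). -/
noncomputable def rot (θ : ℝ) (u : Fin 3 → ℝ) : (Fin 3 → ℝ) → (Fin 3 → ℝ) :=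
  fun x => Real.cos θ • x + Real.sin θ • (crossProduct u x)
    + ((1 - Real.cos θ) * (u ⬝ᵥ x)) • u

open Filter in
private lemma foldl_comp_apply (L : List ((Fin 3 → ℝ) → (Fin 3 → ℝ)))
    (g : (Fin 3 → ℝ) → (Fin 3 → ℝ)) (x : Fin 3 → ℝ) :
    (L.foldl (fun acc R => R ∘ acc) g) x = L.foldl (fun y R => R y) (g x) := by
  induction L generalizing g with
  | nil => rfl
  | cons R L ih => simpa using ih (R ∘ g)

open Filter in
private lemma tendsto_slope_cos (κ : ℝ) (t : ℕ → ℝ) (ht : Tendsto t atTop (nhds 0))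
    (ht0 : ∀ n, t n ≠ 0) :
    Tendsto (fun n => (t n)⁻¹ * (Real.cos (t n * κ) - 1)) atTop (nhds 0) := by
  have hd : HasDerivAt (fun s : ℝ => Real.cos (s * κ)) (-Real.sin (0 * κ) * κ) 0 :=
    (Real.hasDerivAt_cos (0 * κ)).comp (h := fun s : ℝ => s * κ) 0 (hasDerivAt_mul_const κ)
  have hd' : HasDerivAt (fun s : ℝ => Real.cos (s * κ)) 0 0 := by simpa using hd
  have hslope := hasDerivAt_iff_tendsto_slope.mp hd'
  have htw : Tendsto t atTop (nhdsWithin 0 {(0:ℝ)}ᶜ) :=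
    tendsto_nhdsWithin_iff.mpr ⟨ht, Filter.Eventually.of_forall fun n => ht0 n⟩
  have := hslope.comp htw
  simpa [Function.comp_def, slope_def_field, div_eq_inv_mul, mul_comm] using this

open Filter in
private lemma tendsto_slope_sin (κ : ℝ) (t : ℕ → ℝ) (ht : Tendsto t atTop (nhds 0))
    (ht0 : ∀ n, t n ≠ 0) :
    Tendsto (fun n => (t n)⁻¹ * Real.sin (t n * κ)) atTop (nhds κ) := by
  have hd : HasDerivAt (fun s : ℝ => Real.sin (s * κ)) (Real.cos (0 * κ) * κ) 0 :=
    (Real.hasDerivAt_sin (0 * κ)).comp (h := fun s : ℝ => s * κ) 0 (hasDerivAt_mul_const κ)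
  have hd' : HasDerivAt (fun s : ℝ => Real.sin (s * κ)) κ 0 := by simpa using hd
  have hslope := hasDerivAt_iff_tendsto_slope.mp hd'
  have htw : Tendsto t atTop (nhdsWithin 0 {(0:ℝ)}ᶜ) :=
    tendsto_nhdsWithin_iff.mpr ⟨ht, Filter.Eventually.of_forall fun n => ht0 n⟩
  have := hslope.comp htw
  simpa [Function.comp_def, slope_def_field, div_eq_inv_mul, mul_comm] using this

open Filter in
private lemma tendsto_dot {v y : ℕ → Fin 3 → ℝ} {w x : Fin 3 → ℝ}
    (hv : Tendsto v atTop (nhds w)) (hy : Tendsto y atTop (nhds x)) :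
    Tendsto (fun n => v n ⬝ᵥ y n) atTop (nhds (w ⬝ᵥ x)) := by
  have hv' := tendsto_pi_nhds.mp hv
  have hy' := tendsto_pi_nhds.mp hy
  simp only [dotProduct]
  exact tendsto_finset_sum _ fun i _ => (hv' i).mul (hy' i)

open Filter in
private lemma tendsto_cross {v y : ℕ → Fin 3 → ℝ} {w x : Fin 3 → ℝ}
    (hv : Tendsto v atTop (nhds w)) (hy : Tendsto y atTop (nhds x)) :
    Tendsto (fun n => crossProduct (v n) (y n)) atTop (nhds (crossProduct w x)) := by
  have hv' := tendsto_pi_nhds.mp hv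
  have hy' := tendsto_pi_nhds.mp hy
  rw [tendsto_pi_nhds]
  intro j
  fin_cases j <;> simp [cross_apply] <;>
  · first
    | exact ((hv' 1).mul (hy' 2)).sub ((hv' 2).mul (hy' 1))
    | exact ((hv' 2).mul (hy' 0)).sub ((hv' 0).mul (hy' 2))
    | exact ((hv' 0).mul (hy' 1)).sub ((hv' 1).mul (hy' 0))

open Filter in
private lemma tendsto_rot_id (κ : ℝ) {t : ℕ → ℝ} (ht : Tendsto t atTop (nhds 0))
    {v y : ℕ → Fin 3 → ℝ} {w x : Fin 3 → ℝ}
    (hv : Tendsto v atTop (nhds w)) (hy : Tendsto y atTop (nhds x)) :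
    Tendsto (fun n => rot (t n * κ) (v n) (y n)) atTop (nhds x) := by
  have hθ : Tendsto (fun n => t n * κ) atTop (nhds 0) := by
    simpa using ht.mul_const κ
  have hcos : Tendsto (fun n => Real.cos (t n * κ)) atTop (nhds 1) := by
    simpa [Function.comp_def] using (Real.continuous_cos.tendsto 0).comp hθ
  have hsin : Tendsto (fun n => Real.sin (t n * κ)) atTop (nhds 0) := by
    simpa [Function.comp_def] using (Real.continuous_sin.tendsto 0).comp hθ
  have h1 : Tendsto (fun n => Real.cos (t n * κ) • y n) atTop (nhds ((1:ℝ) • x)) :=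
    hcos.smul hy
  have h2 : Tendsto (fun n => Real.sin (t n * κ) • crossProduct (v n) (y n)) atTop
      (nhds ((0:ℝ) • crossProduct w x)) := hsin.smul (tendsto_cross hv hy)
  have h3 : Tendsto (fun n => ((1 - Real.cos (t n * κ)) * (v n ⬝ᵥ y n)) • v n) atTop
      (nhds (((1 - 1) * (w ⬝ᵥ x)) • w)) :=
    (((tendsto_const_nhds.sub hcos).mul (tendsto_dot hv hy)).smul hv)
  have := (h1.add h2).add h3
  simp only [rot]
  simpa using this

open Filter in
private lemma tendsto_rot_slope (κ : ℝ) {t : ℕ → ℝ} (ht : Tendsto t atTop (nhds 0))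
    (ht0 : ∀ n, t n ≠ 0) {v y : ℕ → Fin 3 → ℝ} {w x : Fin 3 → ℝ}
    (hv : Tendsto v atTop (nhds w)) (hy : Tendsto y atTop (nhds x)) :
    Tendsto (fun n => (t n)⁻¹ • (rot (t n * κ) (v n) (y n) - y n)) atTop
      (nhds (κ • crossProduct w x)) := by
  have hA : Tendsto (fun n => ((t n)⁻¹ * (Real.cos (t n * κ) - 1)) • y n) atTop
      (nhds ((0:ℝ) • x)) := (tendsto_slope_cos κ t ht ht0).smul hy
  have hB : Tendsto (fun n => ((t n)⁻¹ * Real.sin (t n * κ)) • crossProduct (v n) (y n)) atTop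
      (nhds (κ • crossProduct w x)) := (tendsto_slope_sin κ t ht ht0).smul (tendsto_cross hv hy)
  have hC : Tendsto (fun n =>
      ((-((t n)⁻¹ * (Real.cos (t n * κ) - 1))) * (v n ⬝ᵥ y n)) • v n) atTop
      (nhds (((-(0:ℝ)) * (w ⬝ᵥ x)) • w)) :=
    (((tendsto_slope_cos κ t ht ht0).neg).mul (tendsto_dot hv hy)).smul hv
  have hsum := (hA.add hB).add hC
  have heq : ∀ n, ((t n)⁻¹ * (Real.cos (t n * κ) - 1)) • y n
      + ((t n)⁻¹ * Real.sin (t n * κ)) • crossProduct (v n) (y n)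
      + ((-((t n)⁻¹ * (Real.cos (t n * κ) - 1))) * (v n ⬝ᵥ y n)) • v n
      = (t n)⁻¹ • (rot (t n * κ) (v n) (y n) - y n) := by
    intro n
    simp only [rot]
    module
  have := hsum.congr heq
  simpa using this

open Filter in
private lemma holonomy_aux (t : ℕ → ℝ) (ht : Tendsto t atTop (nhds 0))
    (ht0 : ∀ n, t n ≠ 0) :
    ∀ (m : ℕ) (κ : Fin m → ℝ) (v : ℕ → Fin m → (Fin 3 → ℝ)) (w : Fin m → (Fin 3 → ℝ)),
    (∀ i, Tendsto (fun n => v n i) atTop (nhds (w i))) → ∀ (x : Fin 3 → ℝ),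
    Tendsto (fun n => (List.ofFn fun i : Fin m => rot (t n * κ i) (v n i)).foldl
        (fun y R => R y) x) atTop (nhds x) ∧
    Tendsto (fun n => (t n)⁻¹ • ((List.ofFn fun i : Fin m => rot (t n * κ i) (v n i)).foldl
        (fun y R => R y) x - x)) atTop (nhds (∑ i, κ i • crossProduct (w i) x)) := by
  intro m
  induction m with
  | zero =>
    intro κ v w hconv x
    simp
  | succ m ih =>
    intro κ v w hconv x
    have hfold : ∀ n, (List.ofFn fun i : Fin (m+1) => rot (t n * κ i) (v n i)).foldl
        (fun y R => R y) x
        = rot (t n * κ (Fin.last m)) (v n (Fin.last m))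
          ((List.ofFn fun i : Fin m => rot (t n * κ i.castSucc) (v n i.castSucc)).foldl
            (fun y R => R y) x) := by
      intro n
      rw [List.ofFn_succ']
      simp [List.concat_eq_append]
    obtain ⟨ih1, ih2⟩ := ih (fun i => κ i.castSucc) (fun n i => v n (i.castSucc))
      (fun i => w i.castSucc) (fun i => hconv i.castSucc) x
    set F : ℕ → Fin 3 → ℝ := fun n =>
      (List.ofFn fun i : Fin m => rot (t n * κ i.castSucc) (v n i.castSucc)).foldl
        (fun y R => R y) x with hF
    constructor
    · have := tendsto_rot_id (κ (Fin.last m)) ht (hconv (Fin.last m)) ih1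
      exact this.congr fun n => (hfold n).symm
    · have hlast := tendsto_rot_slope (κ (Fin.last m)) ht ht0 (hconv (Fin.last m)) ih1
      have hsum := hlast.add ih2
      have heq : ∀ n, (t n)⁻¹ • (rot (t n * κ (Fin.last m)) (v n (Fin.last m)) (F n) - F n)
          + (t n)⁻¹ • (F n - x)
          = (t n)⁻¹ • ((List.ofFn fun i : Fin (m+1) => rot (t n * κ i) (v n i)).foldl
            (fun y R => R y) x - x) := by
        intro n
        rw [hfold n, ← smul_add, sub_add_sub_cancel]
      have h := hsum.congr heq
      have hval : κ (Fin.last m) • crossProduct (w (Fin.last m)) x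
          + ∑ i : Fin m, κ i.castSucc • crossProduct (w i.castSucc) x
          = ∑ i : Fin (m+1), κ i • crossProduct (w i) x := by
        rw [Fin.sum_univ_castSucc]
        abel
      rw [hval] at h
      exact h

theorem holonomy_first_order
    (m : ℕ) (κ : Fin m → ℝ) (t : ℕ → ℝ)
    (ht : Filter.Tendsto t Filter.atTop (nhds 0)) (htpos : ∀ n, 0 < t n)
    (v : ℕ → Fin m → (Fin 3 → ℝ)) (hvunit : ∀ n i, v n i ⬝ᵥ v n i = 1)
    (w : Fin m → (Fin 3 → ℝ))
    (hconv : ∀ i, Filter.Tendsto (fun n => v n i) Filter.atTop (nhds (w i)))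
    (hhol : ∀ n, (List.ofFn (fun i : Fin m => rot (t n * κ i) (v n i))).foldl
        (fun acc R => R ∘ acc) id = id) :
    ∑ i, κ i • w i = 0 := by
  have ht0 : ∀ n, t n ≠ 0 := fun n => (htpos n).ne'
  have key : ∀ x : Fin 3 → ℝ, ∑ i, κ i • crossProduct (w i) x = 0 := by
    intro x
    have h2 := (holonomy_aux t ht ht0 m κ v w hconv x).2
    have hid : ∀ n, (List.ofFn fun i : Fin m => rot (t n * κ i) (v n i)).foldl
        (fun y R => R y) x = x := by
      intro n
      have := congrFun (hhol n) x
      rwa [foldl_comp_apply] at this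
    have h0 : Filter.Tendsto (fun _ : ℕ => (0 : Fin 3 → ℝ)) Filter.atTop
        (nhds (∑ i, κ i • crossProduct (w i) x)) := by
      refine h2.congr fun n => ?_
      rw [hid n]
      simp
    exact (tendsto_nhds_unique tendsto_const_nhds h0).symm
  set a : Fin 3 → ℝ := ∑ i, κ i • w i with ha
  have hcross : ∀ x : Fin 3 → ℝ, crossProduct a x = 0 := by
    intro x
    rw [ha]
    have : crossProduct (∑ i, κ i • w i) x = ∑ i, κ i • crossProduct (w i) x := by
      simp [map_sum, LinearMap.sum_apply, LinearMap.map_smul, LinearMap.smul_apply]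
    rw [this, key]
  have h1 := hcross ![1, 0, 0]
  have h2 := hcross ![0, 1, 0]
  have e1 := congrFun h1 1
  have e2 := congrFun h1 2
  have e0 := congrFun h2 2
  simp [cross_apply] at e0 e1 e2
  funext j
  fin_cases j
  · simpa using e0
  · simpa using e2
  · simpa using e1
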